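/- Let i : N → P be the inclusion of a coreflective full subcategory with right adjoint u : P → N, where both N and P are bicomplete. Suppose there are sets I, J of morphisms of N such that P is a cofibrantly generated model category with generating cofibrations iI, generating acyclic cofibrations iJ, weak equivalences W, and fibrations F. Then N admits a cofibrantly generated model structure with generating cofibrations I, generating acyclic cofibrations J, weak equivalences W ∩ N, and fibrations F ∩ N. -/

import Mathlib

open CategoryTheory CategoryTheory.Limits

universe v u v' u'

variable {M : Type u} [Category.{v} M]

/-- `f` is a pushout (cobase change) of some morphism belonging to the class `K`. -/
def IsPushoutOfClass (K : MorphismProperty M) {X Y : M} (f : X ⟶ Y) : Prop :=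
  ∃ (A B : M) (k : A ⟶ B) (u : A ⟶ X) (v : B ⟶ Y), K k ∧ IsPushout u k f v

/-- A witness that `f : X ⟶ Y` is a transfinite composition of pushouts of morphisms
in `K`, i.e. a `K`-cell complex: there is a well-ordered diagram `F`, starting at `X`,
continuous at limit stages, whose successor maps are pushouts of maps in `K`, and whose
transfinite composite (the component of the colimit at the bottom) is `f`. -/
structure TransfiniteCompositionOfPushouts (K : MorphismProperty M) {X Y : M}
    (f : X ⟶ Y) where
  J : Type v
  [linOrd : LinearOrder J]
  [wellFounded : WellFoundedLT J]
  [orderBot : OrderBot J]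
  [succOrder : SuccOrder J]
  F : J ⥤ M
  isoBot : F.obj ⊥ ≅ X
  cocone : Cocone F
  isColimit : IsColimit cocone
  isoTop : cocone.pt ≅ Y
  fac : f = isoBot.inv ≫ cocone.ι.app ⊥ ≫ isoTop.hom
  succ_pushout : ∀ j : J, ¬ IsMax j →
    IsPushoutOfClass K (F.map (homOfLE (Order.le_succ j)))
  smooth : ∀ j : J, Order.IsSuccLimit j →
    Nonempty (IsColimit (Cocone.mk (F.obj j)
      { app := fun x : Set.Iio j =>
          F.map (homOfLE (le_of_lt x.2) : (x : J) ⟶ j)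
        naturality := by
          intro a b g
          dsimp
          rw [Category.comp_id]
          exact (F.map_comp _ _).symm } :
        Cocone ((Monotone.functor (f := fun x : Set.Iio j => (x : J))
          (fun _ _ h => h)) ⋙ F)))

/-- A morphism is a `K`-cell complex if it admits such a witness. -/
def IsCellComplex (K : MorphismProperty M) : MorphismProperty M :=
  fun _ _ f => Nonempty (TransfiniteCompositionOfPushouts.{v} K f)

/-- The class of morphisms with the right lifting property against all members of `K`. -/
def rlp (K : MorphismProperty M) : MorphismProperty M :=
  fun _ _ f => ∀ ⦃A B : M⦄ (k : A ⟶ B), K k → HasLiftingProperty k f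

/-- The class of morphisms with the left lifting property against all members of `K`. -/
def llp (K : MorphismProperty M) : MorphismProperty M :=
  fun _ _ f => ∀ ⦃A B : M⦄ (k : A ⟶ B), K k → HasLiftingProperty f k

/-- An object `A` is (sequentially) small relative to a class `K`: maps from `A` into the
colimit of an `ℕ`-indexed chain with structure maps in `K` factor, essentially uniquely,
through some stage (the paper's notion of `finite`/small objects). -/
def SeqSmallRel (A : M) (K : MorphismProperty M) : Prop :=
  ∀ (F : ℕ ⥤ M), (∀ n : ℕ, K (F.map (homOfLE (Nat.le_succ n)))) →
    ∀ (c : Cocone F), IsColimit c →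
      (∀ g : A ⟶ c.pt, ∃ (n : ℕ) (h : A ⟶ F.obj n), h ≫ c.ι.app n = g) ∧
      (∀ (n : ℕ) (h₁ h₂ : A ⟶ F.obj n), h₁ ≫ c.ι.app n = h₂ ≫ c.ι.app n →
        ∃ (m : ℕ) (le : n ≤ m), h₁ ≫ F.map (homOfLE le) = h₂ ≫ F.map (homOfLE le))

/-- `f` is a retract of `g` in the arrow category. -/
def IsRetractOfArrow {X Y X' Y' : M} (f : X ⟶ Y) (g : X' ⟶ Y') : Prop :=
  ∃ (i : X ⟶ X') (r : X' ⟶ X) (i' : Y ⟶ Y') (r' : Y' ⟶ Y),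
    i ≫ r = 𝟙 X ∧ i' ≫ r' = 𝟙 Y ∧ i ≫ g = f ≫ i' ∧ g ≫ r' = r ≫ f

/-- The category `M` carries a cofibrantly generated model structure with weak
equivalences `W`, generating cofibrations `I` and generating acyclic cofibrations `J`.
The fibrations are `rlp J`, the cofibrations are `llp (rlp I)`, the acyclic fibrations
are `rlp I` and the acyclic cofibrations are `llp (rlp J)`; the axioms below express
the two-out-of-three property, closure of `W` under retracts, smallness of the domains
of `I` and `J` relative to cell complexes, the compatibilities of the (co)fibrations
with `W`, and the two factorization axioms.  The lifting axioms hold automatically by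
the definitions of `rlp` and `llp`. -/
structure IsCofibrantlyGeneratedModel (W I J : MorphismProperty M) : Prop where
  two_of_three_comp : ∀ {X Y Z : M} (f : X ⟶ Y) (g : Y ⟶ Z), W f → W g → W (f ≫ g)
  two_of_three_left : ∀ {X Y Z : M} (f : X ⟶ Y) (g : Y ⟶ Z), W g → W (f ≫ g) → W f
  two_of_three_right : ∀ {X Y Z : M} (f : X ⟶ Y) (g : Y ⟶ Z), W f → W (f ≫ g) → W g
  retract : ∀ {X Y X' Y' : M} (f : X ⟶ Y) (g : X' ⟶ Y'),
    IsRetractOfArrow f g → W g → W f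
  small_I : ∀ {A B : M} (k : A ⟶ B), I k → SeqSmallRel A (IsCellComplex.{v} I)
  small_J : ∀ {A B : M} (k : A ⟶ B), J k → SeqSmallRel A (IsCellComplex.{v} J)
  rlp_I : ∀ {X Y : M} (f : X ⟶ Y), rlp I f ↔ (W f ∧ rlp J f)
  llp_J : ∀ {X Y : M} (f : X ⟶ Y), llp (rlp J) f ↔ (W f ∧ llp (rlp I) f)
  fact_cof : ∀ {X Y : M} (f : X ⟶ Y),
    ∃ (Z : M) (i : X ⟶ Z) (p : Z ⟶ Y), llp (rlp I) i ∧ rlp I p ∧ i ≫ p = f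
  fact_acof : ∀ {X Y : M} (f : X ⟶ Y),
    ∃ (Z : M) (i : X ⟶ Z) (p : Z ⟶ Y), llp (rlp J) i ∧ rlp J p ∧ i ≫ p = f

section Transfer

variable {N : Type u} {P : Type u'} [Category.{v} N] [Category.{v} P]

/-- A fully faithful functor preserves and reflects lifting properties between
morphisms in its image. -/
lemma hasLiftingProperty_map_iff (i : N ⥤ P) [i.Full] [i.Faithful]
    {A B X Y : N} (k : A ⟶ B) (q : X ⟶ Y) :
    HasLiftingProperty (i.map k) (i.map q) ↔ HasLiftingProperty k q := by
  constructor
  · intro h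
    constructor
    intro f g sq
    have sq' : CommSq (i.map f) (i.map k) (i.map q) (i.map g) :=
      ⟨by rw [← i.map_comp, ← i.map_comp, sq.w]⟩
    exact ⟨⟨⟨i.preimage sq'.lift,
      i.map_injective (by rw [i.map_comp, i.map_preimage, sq'.fac_left]),
      i.map_injective (by rw [i.map_comp, i.map_preimage, sq'.fac_right])⟩⟩⟩
  · intro h
    constructor
    intro f g sq
    have w : i.preimage f ≫ q = k ≫ i.preimage g :=
      i.map_injective (by rw [i.map_comp, i.map_comp, i.map_preimage, i.map_preimage, sq.w])
    have sq' : CommSq (i.preimage f) k q (i.preimage g) := ⟨w⟩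
    exact ⟨⟨⟨i.map sq'.lift,
      by rw [← i.map_comp, sq'.fac_left, i.map_preimage],
      by rw [← i.map_comp, sq'.fac_right, i.map_preimage]⟩⟩⟩

lemma rlp_map_iff (i : N ⥤ P) [i.Full] [i.Faithful] (K : MorphismProperty N)
    {X Y : N} (q : X ⟶ Y) : rlp K q ↔ rlp (K.map i) (i.map q) := by
  constructor
  · rintro h A' B' g ⟨A, B, k, hk, ⟨e⟩⟩
    haveI := (hasLiftingProperty_map_iff i k q).2 (h k hk)
    exact HasLiftingProperty.of_arrow_iso_left e (i.map q)
  · intro h A B k hk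
    exact (hasLiftingProperty_map_iff i k q).1 (h (i.map k) (K.map_mem_map i k hk))

lemma llp_map_iff (i : N ⥤ P) [i.Full] [i.Faithful] (u : P ⥤ N) (adj : i ⊣ u)
    (K : MorphismProperty N) {X Y : N} (f : X ⟶ Y) :
    llp (rlp K) f ↔ llp (rlp (K.map i)) (i.map f) := by
  constructor
  · intro h A B p hp
    rw [adj.hasLiftingProperty_iff]
    refine h (u.map p) ?_
    intro A' B' k hk
    rw [← adj.hasLiftingProperty_iff]
    exact hp (i.map k) (K.map_mem_map i k hk)
  · intro h A B q hq
    exact (hasLiftingProperty_map_iff i f q).1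
      (h (i.map q) ((rlp_map_iff i K q).1 hq))

/-- The counit of the coreflection has the right lifting property against every
morphism coming from `N`. -/
lemma counit_rlp (i : N ⥤ P) [i.Full] [i.Faithful] (u : P ⥤ N) (adj : i ⊣ u)
    (K : MorphismProperty N) (Z : P) : rlp (K.map i) (adj.counit.app Z) := by
  rintro A' B' g ⟨A, B, k, _, ⟨e⟩⟩
  haveI : HasLiftingProperty (i.map k) (adj.counit.app Z) := by
    constructor
    intro f g' sq
    refine ⟨⟨⟨i.map ((adj.homEquiv B Z) g'), ?_, ?_⟩⟩⟩
    · have hf : i.map (i.preimage f) = f := i.map_preimage f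
      rw [← hf, ← i.map_comp]
      congr 1
      apply (adj.homEquiv A Z).symm.injective
      rw [adj.homEquiv_naturality_left_symm, Equiv.symm_apply_apply,
        adj.homEquiv_counit, hf, sq.w]
    · have h := adj.homEquiv_counit B Z ((adj.homEquiv B Z) g')
      rw [Equiv.symm_apply_apply] at h
      exact h.symm
  exact HasLiftingProperty.of_arrow_iso_left e _

/-- Transfer of factorizations from `P` down to the coreflective subcategory `N`. -/
lemma fact_transfer (i : N ⥤ P) [i.Full] [i.Faithful] (u : P ⥤ N) (adj : i ⊣ u)
    [HasLimits N] (K : MorphismProperty N)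
    (hfac : ∀ {X Y : P} (f : X ⟶ Y), ∃ (Z : P) (g : X ⟶ Z) (p : Z ⟶ Y),
      llp (rlp (K.map i)) g ∧ rlp (K.map i) p ∧ g ≫ p = f)
    {X Y : N} (f : X ⟶ Y) :
    ∃ (Z : N) (g : X ⟶ Z) (p : Z ⟶ Y), llp (rlp K) g ∧ rlp K p ∧ g ≫ p = f := by
  obtain ⟨Z, g, p, hg, hp, hgp⟩ := hfac (i.map f)
  have hε := counit_rlp i u adj K Z
  have hcomm : i.map ((adj.homEquiv X Z) g) ≫ adj.counit.app Z = g ≫ 𝟙 Z := by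
    have h := adj.homEquiv_counit X Z ((adj.homEquiv X Z) g)
    rw [Equiv.symm_apply_apply] at h
    rw [Category.comp_id]
    exact h.symm
  have sq : CommSq (i.map ((adj.homEquiv X Z) g)) g (adj.counit.app Z) (𝟙 Z) := ⟨hcomm⟩
  haveI : HasLiftingProperty g (adj.counit.app Z) := hg _ hε
  set s : Z ⟶ i.obj (u.obj Z) := sq.lift with hsdef
  have hs1 : g ≫ s = i.map ((adj.homEquiv X Z) g) := sq.fac_left
  have hs2 : s ≫ adj.counit.app Z = 𝟙 Z := sq.fac_right
  set e' : u.obj Z ⟶ u.obj Z := i.preimage (adj.counit.app Z ≫ s) with he'def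
  have he : i.map e' = adj.counit.app Z ≫ s := i.map_preimage _
  have hee : e' ≫ e' = e' := i.map_injective (by
    rw [i.map_comp, he, Category.assoc, ← Category.assoc s, hs2, Category.id_comp])
  haveI : IsIdempotentComplete N :=
    (Idempotents.isIdempotentComplete_iff_hasEqualizer_of_id_and_idempotent N).2
      (fun _ _ _ => inferInstance)
  obtain ⟨Z', ι, r, h1, h2⟩ := IsIdempotentComplete.idempotents_split (u.obj Z) e' hee
  have A1 : (s ≫ i.map r) ≫ (i.map ι ≫ adj.counit.app Z) = 𝟙 Z := by
    calc (s ≫ i.map r) ≫ (i.map ι ≫ adj.counit.app Z)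
        = s ≫ (i.map r ≫ i.map ι) ≫ adj.counit.app Z := by simp only [Category.assoc]
      _ = s ≫ (adj.counit.app Z ≫ s) ≫ adj.counit.app Z := by
          rw [← i.map_comp, h2, he]
      _ = (s ≫ adj.counit.app Z) ≫ (s ≫ adj.counit.app Z) := by
          simp only [Category.assoc]
      _ = 𝟙 Z := by rw [hs2, Category.id_comp]
  have A2 : (i.map ι ≫ adj.counit.app Z) ≫ (s ≫ i.map r) = 𝟙 (i.obj Z') := by
    calc (i.map ι ≫ adj.counit.app Z) ≫ (s ≫ i.map r)
        = i.map ι ≫ (adj.counit.app Z ≫ s) ≫ i.map r := by simp only [Category.assoc]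
      _ = i.map (ι ≫ e' ≫ r) := by rw [← he]; simp only [i.map_comp]
      _ = i.map ((ι ≫ r) ≫ (ι ≫ r)) := by rw [← h2]; simp only [Category.assoc]
      _ = 𝟙 (i.obj Z') := by rw [h1, Category.id_comp, i.map_id]
  have φ : Z ≅ i.obj Z' := ⟨s ≫ i.map r, i.map ι ≫ adj.counit.app Z, A1, A2⟩
  refine ⟨Z', i.preimage (g ≫ φ.hom), i.preimage (φ.inv ≫ p), ?_, ?_, ?_⟩
  · rw [llp_map_iff i u adj K]
    intro A B q hq
    haveI := hg q hq
    have e : Arrow.mk g ≅ Arrow.mk (i.map (i.preimage (g ≫ φ.hom))) :=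
      Arrow.isoMk (Iso.refl _) φ (by simp [i.map_preimage])
    exact HasLiftingProperty.of_arrow_iso_left e q
  · rw [rlp_map_iff i K]
    intro A B k hk
    haveI := hp k hk
    have e : Arrow.mk p ≅ Arrow.mk (i.map (i.preimage (φ.inv ≫ p))) :=
      Arrow.isoMk φ (Iso.refl _) (by simp [i.map_preimage])
    exact HasLiftingProperty.of_arrow_iso_right k e
  · apply i.map_injective
    rw [i.map_comp, i.map_preimage, i.map_preimage, Category.assoc,
      ← Category.assoc φ.hom, φ.hom_inv_id, Category.id_comp, hgp]

set_option synthInstance.maxHeartbeats 1000000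
set_option maxHeartbeats 1000000

/-- A colimit-preserving fully faithful functor sends `K`-cell complexes to
`K.map i`-cell complexes. -/
lemma cellComplex_map (i : N ⥤ P) [PreservesColimitsOfSize.{v, v} i]
    [PreservesColimitsOfSize.{0, 0} i]
    (K : MorphismProperty N) {X Y : N} (f : X ⟶ Y)
    (hf : IsCellComplex.{v} K f) : IsCellComplex.{v} (K.map i) (i.map f) := by
  obtain ⟨s⟩ := hf
  letI := s.linOrd
  letI := s.wellFounded
  letI := s.orderBot
  letI := s.succOrder
  refine ⟨⟨s.J, s.F ⋙ i, i.mapIso s.isoBot, i.mapCocone s.cocone,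
    isColimitOfPreserves i s.isColimit, i.mapIso s.isoTop, ?_, ?_, ?_⟩⟩
  · rw [i.congr_map s.fac]
    simp
  · intro j hj
    obtain ⟨A, B, k, v, w, hk, hpo⟩ := s.succ_pushout j hj
    exact ⟨i.obj A, i.obj B, i.map k, i.map v, i.map w,
      K.map_mem_map i k hk, hpo.map i⟩
  · intro j hj
    obtain ⟨hc⟩ := s.smooth j hj
    exact ⟨isColimitOfPreserves i hc⟩

/-- Sequential smallness transfers down along the fully faithful colimit-preserving
inclusion. -/
lemma seqSmall_transfer (i : N ⥤ P) [i.Full] [i.Faithful] (u : P ⥤ N) (adj : i ⊣ u)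
    (K : MorphismProperty N) {A : N}
    (h : SeqSmallRel (i.obj A) (IsCellComplex.{v} (K.map i))) :
    SeqSmallRel A (IsCellComplex.{v} K) := by
  haveI : PreservesColimitsOfSize.{v, v} i := adj.leftAdjoint_preservesColimits
  haveI : PreservesColimitsOfSize.{0, 0} i := adj.leftAdjoint_preservesColimits
  intro F hF c hc
  obtain ⟨hexist, huniq⟩ := h (F ⋙ i)
    (fun n => cellComplex_map i K _ (hF n)) (i.mapCocone c) (isColimitOfPreserves i hc)
  constructor
  · intro g
    obtain ⟨n, h', hh'⟩ := hexist (i.map g)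
    refine ⟨n, i.preimage h', i.map_injective ?_⟩
    rw [i.map_comp, i.map_preimage]
    simpa using hh'
  · intro n h₁ h₂ hh
    obtain ⟨m, le, hm⟩ := huniq n (i.map h₁) (i.map h₂) (by
      have : (i.mapCocone c).ι.app n = i.map (c.ι.app n) := rfl
      rw [this, ← i.map_comp, ← i.map_comp, hh])
    refine ⟨m, le, i.map_injective ?_⟩
    rw [i.map_comp, i.map_comp]
    exact hm

end Transfer

/-- Let `i : N → P` be the inclusion of a coreflective full subcategory,
with right adjoint `u`, both `N` and `P` bicomplete.  Suppose `I`, `J` are sets of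
morphisms of `N` such that `P` is a cofibrantly generated model category with generating
cofibrations `iI`, generating acyclic cofibrations `iJ` and weak equivalences `W`.
Then `N` admits a cofibrantly generated model structure with generating cofibrations `I`,
generating acyclic cofibrations `J`, weak equivalences `W ∩ N`; moreover its fibrations
(resp. acyclic fibrations) are exactly the morphisms of `N` which are fibrations
(resp. acyclic fibrations) in `P`. -/
theorem statement2 {N : Type u} {P : Type u'} [Category.{v} N] [Category.{v} P]
    [HasLimits N] [HasColimits N] [HasLimits P] [HasColimits P]
    (i : N ⥤ P) [i.Full] [i.Faithful] (u : P ⥤ N) (adj : i ⊣ u)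
    (I J : MorphismProperty N) (W : MorphismProperty P)
    (hP : IsCofibrantlyGeneratedModel.{v} W (I.map i) (J.map i)) :
    IsCofibrantlyGeneratedModel.{v} (W.inverseImage i) I J ∧
      (∀ {X Y : N} (f : X ⟶ Y), rlp J f ↔ rlp (J.map i) (i.map f)) ∧
      (∀ {X Y : N} (f : X ⟶ Y), rlp I f ↔ rlp (I.map i) (i.map f)) := by
  refine ⟨?_, fun f => rlp_map_iff i J f, fun f => rlp_map_iff i I f⟩
  constructor
  · intro X Y Z f g hf hg
    have : W (i.map f ≫ i.map g) := hP.two_of_three_comp _ _ hf hg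
    rwa [← i.map_comp] at this
  · intro X Y Z f g hg hfg
    exact hP.two_of_three_left (i.map f) (i.map g) hg (by rwa [← i.map_comp])
  · intro X Y Z f g hf hfg
    exact hP.two_of_three_right (i.map f) (i.map g) hf (by rwa [← i.map_comp])
  · rintro X Y X' Y' f g ⟨a, r, a', r', h1, h2, h3, h4⟩ hg
    refine hP.retract (i.map f) (i.map g)
      ⟨i.map a, i.map r, i.map a', i.map r', ?_, ?_, ?_, ?_⟩ hg
    · rw [← i.map_comp, h1, i.map_id]
    · rw [← i.map_comp, h2, i.map_id]
    · rw [← i.map_comp, ← i.map_comp, h3]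
    · rw [← i.map_comp, ← i.map_comp, h4]
  · intro A B k hk
    exact seqSmall_transfer i u adj I
      (hP.small_I (i.map k) (I.map_mem_map i k hk))
  · intro A B k hk
    exact seqSmall_transfer i u adj J
      (hP.small_J (i.map k) (J.map_mem_map i k hk))
  · intro X Y f
    rw [rlp_map_iff i I f, rlp_map_iff i J f, hP.rlp_I (i.map f)]
    rfl
  · intro X Y f
    rw [llp_map_iff i u adj J f, llp_map_iff i u adj I f, hP.llp_J (i.map f)]
    rfl
  · intro X Y f
    exact fact_transfer i u adj I (fun f' => hP.fact_cof f') f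
  · intro X Y f
    exact fact_transfer i u adj J (fun f' => hP.fact_acof f') f
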